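/- Let A_i ∈ ℝ^{m_i×n}, b_i ∈ ℝ^{m_i}, c_i ∈ ℝ^n, d_i ∈ ℝ for i = 1,…,k, F ∈ ℝ^{m×n}, c ∈ ℝ^n, g ∈ ℝ^m. If the SOCP (minimize cᵀx subject to ‖A_i x + b_i‖ ≤ c_iᵀx + d_i for all i and Fx = g) attains its minimum, then it has an optimal solution x* with card(x*) ≤ m + Σ_{i=1}^{k} (m_i + 1). -/

import Mathlib

open Matrix

noncomputable def ext0 {n : ℕ} (s : Finset (Fin n)) : (↥s → ℝ) →ₗ[ℝ] (Fin n → ℝ) where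
  toFun f j := if h : j ∈ s then f ⟨j, h⟩ else 0
  map_add' f g := by funext j; by_cases h : j ∈ s <;> simp [h]
  map_smul' r f := by funext j; by_cases h : j ∈ s <;> simp [h]

lemma lp_sparsify {n : ℕ} {ι : Type} [Fintype ι] (L : (Fin n → ℝ) →ₗ[ℝ] (ι → ℝ))
    (c : Fin n → ℝ) :
    ∀ N (y : Fin n → ℝ), (Finset.univ.filter fun i => y i ≠ 0).card = N →
      (∀ x, L x = L y → c ⬝ᵥ y ≤ c ⬝ᵥ x) →
      ∃ x', L x' = L y ∧ c ⬝ᵥ x' = c ⬝ᵥ y ∧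
        (Finset.univ.filter fun i => x' i ≠ 0).card ≤ Fintype.card ι := by
  intro N
  induction N using Nat.strong_induction_on with
  | _ N IH =>
    intro y hN hopt
    by_cases hle : (Finset.univ.filter fun i => y i ≠ 0).card ≤ Fintype.card ι
    · exact ⟨y, rfl, rfl, hle⟩
    push_neg at hle
    set s : Finset (Fin n) := Finset.univ.filter fun i => y i ≠ 0 with hs
    have hys : ∀ i, i ∉ s → y i = 0 := by
      intro i hi
      by_contra h
      exact hi (by simp [hs, h])
    -- find nonzero kernel vector supported on s
    have hnotinj : ¬ Function.Injective (L.comp (ext0 s)) := by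
      intro hinj
      have h1 := LinearMap.finrank_le_finrank_of_injective hinj
      rw [Module.finrank_fintype_fun_eq_card, Module.finrank_fintype_fun_eq_card,
        Fintype.card_coe] at h1
      omega
    rw [← LinearMap.ker_eq_bot] at hnotinj
    obtain ⟨z₀, hz₀mem, hz₀ne⟩ := Submodule.exists_mem_ne_zero_of_ne_bot hnotinj
    set z : Fin n → ℝ := ext0 s z₀ with hz
    have hLz : L z = 0 := hz₀mem
    have hzsupp : ∀ j, j ∉ s → z j = 0 := by
      intro j hj
      simp [hz, ext0, hj]
    have hzne : z ≠ 0 := by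
      intro h
      apply hz₀ne
      funext j
      have : z j.1 = 0 := by rw [h]; rfl
      simpa [hz, ext0, j.2] using this
    obtain ⟨j, hj⟩ : ∃ j, z j ≠ 0 := by
      by_contra h
      push_neg at h
      exact hzne (funext h)
    have hjs : j ∈ s := by
      by_contra h
      exact hj (hzsupp j h)
    have hcz : c ⬝ᵥ z = 0 := by
      by_contra hne
      have h1 : L (y - (c ⬝ᵥ z) • z) = L y := by
        simp [map_sub, _root_.map_smul, hLz]
      have h2 := hopt _ h1
      have h3 : c ⬝ᵥ (y - (c ⬝ᵥ z) • z) = c ⬝ᵥ y - (c ⬝ᵥ z) ^ 2 := by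
        rw [dotProduct_sub, dotProduct_smul]
        ring_nf
      have h4 : 0 < (c ⬝ᵥ z) ^ 2 := by positivity
      rw [h3] at h2
      linarith
    set t : ℝ := y j / z j with ht
    set y' : Fin n → ℝ := y - t • z with hy'
    have hLy' : L y' = L y := by simp [hy', map_sub, _root_.map_smul, hLz]
    have hcy' : c ⬝ᵥ y' = c ⬝ᵥ y := by
      rw [hy', dotProduct_sub, dotProduct_smul, hcz]
      simp
    have hopt' : ∀ x, L x = L y' → c ⬝ᵥ y' ≤ c ⬝ᵥ x := by
      intro x hx
      rw [hcy']
      exact hopt x (by rw [hx, hLy'])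
    have hsub : (Finset.univ.filter fun i => y' i ≠ 0) ⊆ s.erase j := by
      intro i hi
      simp only [Finset.mem_filter, Finset.mem_univ, true_and] at hi
      have his : i ∈ s := by
        by_contra h
        exact hi (by simp [hy', hys i h, hzsupp i h])
      have hij : i ≠ j := by
        rintro rfl
        apply hi
        simp only [hy', Pi.sub_apply, Pi.smul_apply, smul_eq_mul, ht]
        field_simp
        ring
      exact Finset.mem_erase.mpr ⟨hij, his⟩
    have hcard : (Finset.univ.filter fun i => y' i ≠ 0).card < N := by
      calc (Finset.univ.filter fun i => y' i ≠ 0).card ≤ (s.erase j).card :=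
            Finset.card_le_card hsub
        _ = s.card - 1 := Finset.card_erase_of_mem hjs
        _ < N := by
            have : 0 < s.card := Finset.card_pos.mpr ⟨j, hjs⟩
            omega
    obtain ⟨x', h1, h2, h3⟩ := IH _ hcard y' rfl hopt'
    exact ⟨x', h1.trans hLy', h2.trans hcy', h3⟩

theorem stmt17 (n m k : ℕ) (mi : Fin k → ℕ)
    (A : ∀ i, Matrix (Fin (mi i)) (Fin n) ℝ) (b : ∀ i, Fin (mi i) → ℝ)
    (ci : Fin k → Fin n → ℝ) (d : Fin k → ℝ)
    (F : Matrix (Fin m) (Fin n) ℝ) (g : Fin m → ℝ) (c : Fin n → ℝ)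
    (y : Fin n → ℝ)
    (hyfeas : (∀ i, Real.sqrt (∑ j, ((A i).mulVec y j + b i j) ^ 2) ≤
        ci i ⬝ᵥ y + d i) ∧ F.mulVec y = g)
    (hyopt : ∀ x : Fin n → ℝ,
      (∀ i, Real.sqrt (∑ j, ((A i).mulVec x j + b i j) ^ 2) ≤ ci i ⬝ᵥ x + d i) →
      F.mulVec x = g → c ⬝ᵥ y ≤ c ⬝ᵥ x) :
    ∃ x' : Fin n → ℝ,
      (∀ i, Real.sqrt (∑ j, ((A i).mulVec x' j + b i j) ^ 2) ≤ ci i ⬝ᵥ x' + d i) ∧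
      F.mulVec x' = g ∧ c ⬝ᵥ x' = c ⬝ᵥ y ∧
      (Finset.univ.filter fun i => x' i ≠ 0).card ≤ m + ∑ i, (mi i + 1) := by
  classical
  let ι := Fin m ⊕ (Σ i : Fin k, Fin (mi i) ⊕ Unit)
  let L : (Fin n → ℝ) →ₗ[ℝ] (ι → ℝ) :=
    { toFun := fun x => Sum.elim (F.mulVec x)
        (fun p => Sum.elim ((A p.1).mulVec x) (fun _ => ci p.1 ⬝ᵥ x) p.2),
      map_add' := by
        intro u v
        funext i
        rcases i with i | ⟨i, j | j⟩ <;>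
          simp [Matrix.mulVec_add, add_dotProduct, dotProduct_add]
      map_smul' := by
        intro r u
        funext i
        rcases i with i | ⟨i, j | j⟩ <;>
          simp [Matrix.mulVec_smul, dotProduct_smul, smul_dotProduct] }
    -- extraction
  have hext : ∀ x : Fin n → ℝ, L x = L y →
      F.mulVec x = F.mulVec y ∧ (∀ i, (A i).mulVec x = (A i).mulVec y) ∧
        (∀ i, ci i ⬝ᵥ x = ci i ⬝ᵥ y) := by
    intro x hx
    refine ⟨funext fun i => ?_, fun i => funext fun jj => ?_, fun i => ?_⟩
    · exact congrFun hx (Sum.inl i)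
    · exact congrFun hx (Sum.inr ⟨i, Sum.inl jj⟩)
    · exact congrFun hx (Sum.inr ⟨i, Sum.inr ()⟩)
  have hfeas : ∀ x : Fin n → ℝ, L x = L y →
      (∀ i, Real.sqrt (∑ j, ((A i).mulVec x j + b i j) ^ 2) ≤ ci i ⬝ᵥ x + d i) ∧
        F.mulVec x = g := by
    intro x hx
    obtain ⟨hF, hA, hc⟩ := hext x hx
    refine ⟨fun i => ?_, by rw [hF, hyfeas.2]⟩
    rw [hA i, hc i]
    exact hyfeas.1 i
  have hopt : ∀ x, L x = L y → c ⬝ᵥ y ≤ c ⬝ᵥ x := by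
    intro x hx
    obtain ⟨h1, h2⟩ := hfeas x hx
    exact hyopt x h1 h2
  obtain ⟨x', hL, hc, hcard⟩ := lp_sparsify L c _ y rfl hopt
  obtain ⟨h1, h2⟩ := hfeas x' hL
  refine ⟨x', h1, h2, hc, ?_⟩
  calc (Finset.univ.filter fun i => x' i ≠ 0).card ≤ Fintype.card ι := hcard
    _ = m + ∑ i, (mi i + 1) := by
        simp [ι, Fintype.card_sum, Fintype.card_sigma]
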